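/- Let B ⊆ P be a principal coalgebra C-extension, π: C → D a coalgebra map, ē = π(e), A = P^{co D}_ē, Ā = {a ∈ P | (π ⊗ id)∘λ(a) = ē ⊗ a} where λ(p) = ψ⁻¹(p ⊗ e). Then the canonical Galois map restricts to an isomorphism Ā ⊗_B A ≅ {w ∈ P ⊗ X | Λ(w) = ē ⊗ w}, where Λ = (π ⊗ id ⊗ id)∘(ψ⁻¹ ⊗ id)∘(id ⊗ Δ) is the left D-coaction on P ⊗ X and X = C^{co D}_ē. -/

import Mathlib

open TensorProduct

variable (k C D P : Type) [Field k] [AddCommGroup C] [Module k C] [Coalgebra k C]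
  [AddCommGroup D] [Module k D] [Coalgebra k D]
  [Ring P] [Algebra k P]

/-- The canonical Galois map `P ⊗ P → P ⊗ C`, `p ⊗ q ↦ p·ρ(q)`. -/
noncomputable def canMap (ρ : P →ₗ[k] P ⊗[k] C) : P ⊗[k] P →ₗ[k] P ⊗[k] C :=
  LinearMap.rTensor C (LinearMap.mul' k P) ∘ₗ
    (TensorProduct.assoc k P P C).symm.toLinearMap ∘ₗ LinearMap.lTensor P ρ

/-- The coinvariants `B = P^{co C}`. -/
def coinv (ρ : P →ₗ[k] P ⊗[k] C) : Set P :=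
  {b : P | ∀ p : P, ρ (b * p) = LinearMap.rTensor C (LinearMap.mulLeft k b) (ρ p)}

/-- The kernel of `P ⊗ₖ P → P ⊗_B P`. -/
def galRel (ρ : P →ₗ[k] P ⊗[k] C) : Submodule k (P ⊗[k] P) :=
  Submodule.span k
    {w : P ⊗[k] P | ∃ p q b : P, b ∈ coinv k C P ρ ∧
      w = (p * b) ⊗ₜ[k] q - p ⊗ₜ[k] (b * q)}

/-- The `ē`-coinvariants `X ⊆ C`. -/
noncomputable def Xsub (π : C →ₗ[k] D) (eb : D) : Submodule k C :=
  LinearMap.ker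
    ((LinearMap.lTensor C π ∘ₗ Coalgebra.comul (R := k) (A := C)) -
      (TensorProduct.mk k C D).flip eb)

/-- The `ē`-coinvariants `A ⊆ P` (for the right `D`-coaction). -/
noncomputable def Asub (ρ : P →ₗ[k] P ⊗[k] C) (π : C →ₗ[k] D) (eb : D) :
    Submodule k P :=
  LinearMap.ker ((LinearMap.lTensor P π ∘ₗ ρ) - (TensorProduct.mk k P D).flip eb)

/-- The left `ē`-coinvariants `Ā = {a | (π ⊗ id)∘λ(a) = ē ⊗ a}`, where
`λ(p) = ψ⁻¹(p ⊗ e)`. -/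
def Abar (ψ : C ⊗[k] P ≃ₗ[k] P ⊗[k] C) (π : C →ₗ[k] D) (e : C) : Set P :=
  {a : P | LinearMap.rTensor P π (ψ.symm (a ⊗ₜ[k] e)) = (π e) ⊗ₜ[k] a}

/-- The map `Λ = (π ⊗ id ⊗ id)∘(ψ⁻¹ ⊗ id)∘(id ⊗ Δ) : P ⊗ C → D ⊗ (P ⊗ C)`. -/
noncomputable def ΛMap (ψ : C ⊗[k] P ≃ₗ[k] P ⊗[k] C) (π : C →ₗ[k] D) :
    P ⊗[k] C →ₗ[k] D ⊗[k] (P ⊗[k] C) :=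
  (TensorProduct.assoc k D P C).toLinearMap ∘ₗ
    LinearMap.rTensor C (LinearMap.rTensor P π) ∘ₗ
    LinearMap.rTensor C ψ.symm.toLinearMap ∘ₗ
    (TensorProduct.assoc k P C C).symm.toLinearMap ∘ₗ
    LinearMap.lTensor P (Coalgebra.comul (R := k) (A := C))

/-- The kernel of `Ā ⊗ₖ A → Ā ⊗_B A`. -/
noncomputable def galRelAbarA (ρ : P →ₗ[k] P ⊗[k] C) (ψ : C ⊗[k] P ≃ₗ[k] P ⊗[k] C)
    (π : C →ₗ[k] D) (e : C) : Submodule k (P ⊗[k] P) :=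
  Submodule.span k
    {w : P ⊗[k] P | ∃ p ∈ Abar k C D P ψ π e, ∃ b ∈ coinv k C P ρ,
      ∃ a ∈ Asub k C D P ρ π (π e), w = (p * b) ⊗ₜ[k] a - p ⊗ₜ[k] (b * a)}


set_option linter.unusedSectionVars false
set_option maxHeartbeats 1000000

namespace St10

open LinearMap


open LinearMap

section helpers

variable {k : Type} [Field k]
variable {M N Q R' : Type} [AddCommGroup M] [Module k M] [AddCommGroup N] [Module k N]
  [AddCommGroup Q] [Module k Q] [AddCommGroup R'] [Module k R']

/-- collapse helper for `assoc.symm`. -/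
lemma H1 (g : M ⊗[k] N →ₗ[k] R') (m : M) (w : N ⊗[k] Q) :
    LinearMap.rTensor Q g ((TensorProduct.assoc k M N Q).symm (m ⊗ₜ[k] w)) =
      LinearMap.rTensor Q (g ∘ₗ TensorProduct.mk k M N m) w := by
  induction w using TensorProduct.induction_on with
  | zero => simp
  | tmul n q => simp
  | add x y hx hy => rw [tmul_add, map_add, map_add, hx, hy, map_add]

/-- collapse helper for `assoc`. -/
lemma H2 (g : N ⊗[k] Q →ₗ[k] R') (w : M ⊗[k] N) (q : Q) :
    LinearMap.lTensor M g (TensorProduct.assoc k M N Q (w ⊗ₜ[k] q)) =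
      LinearMap.lTensor M (g ∘ₗ (TensorProduct.mk k N Q).flip q) w := by
  induction w using TensorProduct.induction_on with
  | zero => simp
  | tmul m n => simp
  | add x y hx hy => rw [add_tmul, map_add, map_add, hx, hy, map_add]

end helpers

variable (ρ : P →ₗ[k] P ⊗[k] C) (ψ : C ⊗[k] P ≃ₗ[k] P ⊗[k] C) (π : C →ₗ[k] D) (e : C)
  (σ : P →ₗ[k] P ⊗[k] P)

lemma mulLeft_eq (p : P) :
    LinearMap.mul' k P ∘ₗ TensorProduct.mk k P P p = LinearMap.mulLeft k p := by
  ext x; simp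

lemma mulLeft_add' (a b : P) :
    LinearMap.mulLeft k (a + b) = LinearMap.mulLeft k a + LinearMap.mulLeft k b := by
  ext x; simp [add_mul]

lemma mulLeft_smul' (c : k) (b : P) :
    LinearMap.mulLeft k (c • b) = c • LinearMap.mulLeft k b := by
  ext x; simp [smul_mul_assoc]

lemma mulLeft_zero' : LinearMap.mulLeft k (0 : P) = 0 := by
  ext x; simp

/-- B as a submodule. -/
def Bsub : Submodule k P where
  carrier := coinv k C P ρ
  add_mem' := by
    intro a b ha hb p
    rw [add_mul, map_add, ha p, hb p, mulLeft_add', rTensor_add, LinearMap.add_apply]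
  zero_mem' := by
    intro p
    rw [zero_mul, map_zero, mulLeft_zero', rTensor_zero, LinearMap.zero_apply]
  smul_mem' := by
    intro c b hb p
    rw [smul_mul_assoc, map_smul, hb p, mulLeft_smul', rTensor_smul, LinearMap.smul_apply]

lemma mem_Bsub (b : P) : b ∈ Bsub k C P ρ ↔ b ∈ coinv k C P ρ := Iff.rfl

/-- the map whose kernel is `A`. -/
noncomputable def fA : P →ₗ[k] P ⊗[k] D :=
  (LinearMap.lTensor P π ∘ₗ ρ) - (TensorProduct.mk k P D).flip (π e)

/-- the map whose kernel is `X`. -/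
noncomputable def gX : C →ₗ[k] C ⊗[k] D :=
  (LinearMap.lTensor C π ∘ₗ Coalgebra.comul (R := k) (A := C)) -
    (TensorProduct.mk k C D).flip (π e)

/-- left coaction candidate `λ_π`. -/
noncomputable def lamPi : P →ₗ[k] D ⊗[k] P :=
  LinearMap.rTensor P π ∘ₗ ψ.symm.toLinearMap ∘ₗ (TensorProduct.mk k P C).flip e

/-- `μ = λ_π - ē ⊗ -`. -/
noncomputable def muM : P →ₗ[k] D ⊗[k] P :=
  lamPi k C D P ψ π e - TensorProduct.mk k D P (π e)

lemma lamPi_apply (p : P) :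
    lamPi k C D P ψ π e p = LinearMap.rTensor P π (ψ.symm (p ⊗ₜ[k] e)) := rfl

lemma muM_apply (p : P) :
    muM k C D P ψ π e p
      = LinearMap.rTensor P π (ψ.symm (p ⊗ₜ[k] e)) - (π e) ⊗ₜ[k] p := rfl

/-- the operator `E`. -/
noncomputable def Emap : P ⊗[k] P →ₗ[k] P ⊗[k] P :=
  LinearMap.rTensor P (LinearMap.mul' k P) ∘ₗ
    (TensorProduct.assoc k P P P).symm.toLinearMap ∘ₗ LinearMap.lTensor P σ

/-- `(z ⊗ b) ↦ z·b` on `(D⊗P)⊗P`. -/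
noncomputable def actDP : (D ⊗[k] P) ⊗[k] P →ₗ[k] D ⊗[k] P :=
  LinearMap.lTensor D (LinearMap.mul' k P) ∘ₗ (TensorProduct.assoc k D P P).toLinearMap

/-- `b ↦ z·b`. -/
noncomputable def actz (z : D ⊗[k] P) : P →ₗ[k] D ⊗[k] P :=
  actDP k D P ∘ₗ TensorProduct.mk k (D ⊗[k] P) P z

/-- the operator `E` for the left `D⊗P` version. -/
noncomputable def RDP : (D ⊗[k] P) ⊗[k] P →ₗ[k] (D ⊗[k] P) ⊗[k] P :=
  LinearMap.rTensor P (actDP k D P) ∘ₗ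
    (TensorProduct.assoc k (D ⊗[k] P) P P).symm.toLinearMap ∘ₗ
    LinearMap.lTensor (D ⊗[k] P) σ

/-- `Dot p` : `w ↦ w • p`. -/
noncomputable def Dotp (p : P) : P ⊗[k] C →ₗ[k] P ⊗[k] C :=
  LinearMap.rTensor C (LinearMap.mul' k P) ∘ₗ
    (TensorProduct.assoc k P P C).symm.toLinearMap ∘ₗ
    LinearMap.lTensor P (ψ.toLinearMap ∘ₗ (TensorProduct.mk k C P).flip p)

/-- `Ξ = (id ⊗ can) ∘ assoc`. -/
noncomputable def Xi : (D ⊗[k] P) ⊗[k] P →ₗ[k] D ⊗[k] (P ⊗[k] C) :=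
  LinearMap.lTensor D (canMap k C P ρ) ∘ₗ (TensorProduct.assoc k D P P).toLinearMap

/-- the relation module with right legs in `A`. -/
noncomputable def KA : Submodule k (P ⊗[k] P) :=
  Submodule.span k
    {w : P ⊗[k] P | ∃ p : P, ∃ b ∈ coinv k C P ρ,
      ∃ a ∈ LinearMap.ker (fA k C D P ρ π e),
      w = (p * b) ⊗ₜ[k] a - p ⊗ₜ[k] (b * a)}

lemma canMap_tmul (p q : P) :
    canMap k C P ρ (p ⊗ₜ[k] q) = LinearMap.rTensor C (LinearMap.mulLeft k p) (ρ q) := by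
  simp only [canMap, LinearMap.coe_comp, Function.comp_apply, LinearMap.lTensor_tmul,
    LinearEquiv.coe_coe]
  rw [H1, mulLeft_eq]

lemma Emap_tmul (p q : P) :
    Emap k P σ (p ⊗ₜ[k] q) = LinearMap.rTensor P (LinearMap.mulLeft k p) (σ q) := by
  simp only [Emap, LinearMap.coe_comp, Function.comp_apply, LinearMap.lTensor_tmul,
    LinearEquiv.coe_coe]
  rw [H1, mulLeft_eq]

lemma actDP_tmul (z : D ⊗[k] P) (b : P) :
    actDP k D P (z ⊗ₜ[k] b) = LinearMap.lTensor D (LinearMap.mulRight k b) z := by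
  simp only [actDP, LinearMap.coe_comp, Function.comp_apply, LinearEquiv.coe_coe]
  induction z using TensorProduct.induction_on with
  | zero => simp
  | tmul d r => simp
  | add x y hx hy => rw [add_tmul, map_add, map_add, hx, hy, map_add]

lemma actz_apply (z : D ⊗[k] P) (b : P) :
    actz k D P z b = LinearMap.lTensor D (LinearMap.mulRight k b) z := by
  simp only [actz, LinearMap.coe_comp, Function.comp_apply, TensorProduct.mk_apply]
  exact actDP_tmul k D P z b

lemma RDP_tmul (z : D ⊗[k] P) (q : P) :
    RDP k D P σ (z ⊗ₜ[k] q) = LinearMap.rTensor P (actz k D P z) (σ q) := by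
  simp only [RDP, LinearMap.coe_comp, Function.comp_apply, LinearMap.lTensor_tmul,
    LinearEquiv.coe_coe]
  rw [H1]
  rfl

lemma Dotp_tmul (p x : P) (c : C) :
    Dotp k C P ψ p (x ⊗ₜ[k] c)
      = LinearMap.rTensor C (LinearMap.mulLeft k x) (ψ (c ⊗ₜ[k] p)) := by
  simp only [Dotp, LinearMap.coe_comp, Function.comp_apply, LinearMap.lTensor_tmul,
    LinearEquiv.coe_coe, LinearMap.flip_apply, TensorProduct.mk_apply]
  rw [H1, mulLeft_eq]

lemma Xi_tmul (z : D ⊗[k] P) (q : P) :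
    Xi k C D P ρ (z ⊗ₜ[k] q)
      = LinearMap.lTensor D (canMap k C P ρ ∘ₗ (TensorProduct.mk k P P).flip q) z := by
  simp only [Xi, LinearMap.coe_comp, Function.comp_apply, LinearEquiv.coe_coe]
  rw [H2]


open LinearMap

section flatstuff
variable {k : Type} [Field k]
variable {M N Q : Type} [AddCommGroup M] [Module k M] [AddCommGroup N] [Module k N]
  [AddCommGroup Q] [Module k Q]

lemma ker_lTensor_eq (h : M →ₗ[k] N) :
    LinearMap.ker (LinearMap.lTensor Q h)
      = LinearMap.range (LinearMap.lTensor Q (LinearMap.ker h).subtype) :=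
  (Module.Flat.lTensor_exact (M := Q) h.exact_subtype_ker_map).linearMap_ker_eq

lemma ker_rTensor_eq (h : M →ₗ[k] N) :
    LinearMap.ker (LinearMap.rTensor Q h)
      = LinearMap.range (LinearMap.rTensor Q (LinearMap.ker h).subtype) :=
  (Module.Flat.rTensor_exact (M := Q) h.exact_subtype_ker_map).linearMap_ker_eq

lemma lTensor_inj (h : M →ₗ[k] N) (hh : Function.Injective h) :
    Function.Injective (LinearMap.lTensor Q h) :=
  Module.Flat.lTensor_preserves_injective_linearMap h hh

lemma rTensor_inj (h : M →ₗ[k] N) (hh : Function.Injective h) :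
    Function.Injective (LinearMap.rTensor Q h) :=
  Module.Flat.rTensor_preserves_injective_linearMap h hh

end flatstuff





lemma rho_coinv (h1 : ρ 1 = 1 ⊗ₜ[k] e) {b : P} (hb : b ∈ coinv k C P ρ) :
    ρ b = b ⊗ₜ[k] e := by
  have := hb 1
  rw [mul_one, h1] at this
  rw [this, rTensor_tmul, mulLeft_apply, mul_one]

lemma hent' (hent : ∀ q p : P,
      ρ (q * p) =
        LinearMap.rTensor C (LinearMap.mul' k P)
          ((TensorProduct.assoc k P P C).symm
            (LinearMap.lTensor P ψ.toLinearMap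
              (TensorProduct.assoc k P C P ((ρ q) ⊗ₜ[k] p))))) :
    ∀ q p : P, ρ (q * p) = Dotp k C P ψ p (ρ q) := by
  intro q p
  rw [hent q p]
  simp only [Dotp, LinearMap.coe_comp, Function.comp_apply, LinearEquiv.coe_coe]
  congr 2
  induction ρ q using TensorProduct.induction_on with
  | zero => simp
  | tmul x c => simp
  | add x y hx hy => rw [add_tmul, map_add, map_add, map_add, hx, hy]

lemma Dotp_mulLeft (p r : P) (w : P ⊗[k] C) :
    Dotp k C P ψ p (LinearMap.rTensor C (LinearMap.mulLeft k r) w)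
      = LinearMap.rTensor C (LinearMap.mulLeft k r) (Dotp k C P ψ p w) := by
  induction w using TensorProduct.induction_on with
  | zero => simp
  | tmul x c =>
      rw [rTensor_tmul, mulLeft_apply, Dotp_tmul, Dotp_tmul, LinearMap.mulLeft_mul,
        rTensor_comp, LinearMap.comp_apply]
  | add x y hx hy => rw [map_add, map_add, hx, hy, map_add, map_add]

lemma DotCan (hent : ∀ q p : P, ρ (q * p) = Dotp k C P ψ p (ρ q)) (p : P)
    (u : P ⊗[k] P) :
    Dotp k C P ψ p (canMap k C P ρ u)
      = canMap k C P ρ (LinearMap.lTensor P (LinearMap.mulRight k p) u) := by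
  induction u using TensorProduct.induction_on with
  | zero => simp
  | tmul r q =>
      rw [canMap_tmul, Dotp_mulLeft, ← hent q p, lTensor_tmul, mulRight_apply, canMap_tmul]
  | add x y hx hy => rw [map_add, map_add, hx, hy, map_add, map_add]

lemma lemmaM (hent : ∀ q p : P, ρ (q * p) = Dotp k C P ψ p (ρ q))
    (hsurj : Function.Surjective (canMap k C P ρ)) (c : C) (q p : P) :
    ψ (c ⊗ₜ[k] (q * p)) = Dotp k C P ψ p (ψ (c ⊗ₜ[k] q)) := by
  obtain ⟨u, hu⟩ := hsurj ((1 : P) ⊗ₜ[k] c)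
  have key : ∀ q' : P, ψ (c ⊗ₜ[k] q')
      = canMap k C P ρ (LinearMap.lTensor P (LinearMap.mulRight k q') u) := by
    intro q'
    rw [← DotCan k C P ρ ψ hent, hu, Dotp_tmul, LinearMap.mulLeft_one, rTensor_id,
      LinearMap.id_apply]
  rw [key q, key (q * p), DotCan k C P ρ ψ hent, ← LinearMap.lTensor_comp_apply,
    ← LinearMap.mulRight_mul]

lemma lemmaM' (hent : ∀ q p : P, ρ (q * p) = Dotp k C P ψ p (ρ q))
    (hsurj : Function.Surjective (canMap k C P ρ)) (p : P) (v : C ⊗[k] P) :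
    ψ (LinearMap.lTensor C (LinearMap.mulRight k p) v) = Dotp k C P ψ p (ψ v) := by
  induction v using TensorProduct.induction_on with
  | zero => simp
  | tmul c q =>
      rw [lTensor_tmul, mulRight_apply]
      exact lemmaM k C P ρ ψ hent hsurj c q p
  | add x y hx hy => rw [map_add, map_add, hx, hy, map_add, map_add]

lemma lemmaMinv (hent : ∀ q p : P, ρ (q * p) = Dotp k C P ψ p (ρ q))
    (hsurj : Function.Surjective (canMap k C P ρ)) (p : P) (w : P ⊗[k] C) :
    ψ.symm (Dotp k C P ψ p w) = LinearMap.lTensor C (LinearMap.mulRight k p) (ψ.symm w) := by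
  apply ψ.injective
  rw [LinearEquiv.apply_symm_apply, lemmaM' k C P ρ ψ hent hsurj, LinearEquiv.apply_symm_apply]

lemma psi_e (hent : ∀ q p : P, ρ (q * p) = Dotp k C P ψ p (ρ q))
    (h1 : ρ 1 = 1 ⊗ₜ[k] e) (p : P) : ψ (e ⊗ₜ[k] p) = ρ p := by
  have := hent 1 p
  rw [one_mul, h1, Dotp_tmul, LinearMap.mulLeft_one, rTensor_id, LinearMap.id_apply] at this
  exact this.symm

lemma can_tmul_one (h1 : ρ 1 = 1 ⊗ₜ[k] e) (p : P) :
    canMap k C P ρ (p ⊗ₜ[k] (1 : P)) = p ⊗ₜ[k] e := by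
  rw [canMap_tmul, h1, rTensor_tmul, mulLeft_apply, mul_one]

lemma keyK (hent : ∀ q p : P, ρ (q * p) = Dotp k C P ψ p (ρ q))
    (hsurj : Function.Surjective (canMap k C P ρ)) (h1 : ρ 1 = 1 ⊗ₜ[k] e) (p q : P) :
    ψ.symm (canMap k C P ρ (p ⊗ₜ[k] q))
      = LinearMap.lTensor C (LinearMap.mulRight k q) (ψ.symm (p ⊗ₜ[k] e)) := by
  have h2 : canMap k C P ρ (p ⊗ₜ[k] q) = Dotp k C P ψ q (p ⊗ₜ[k] e) := by
    rw [← can_tmul_one k C P ρ e h1 p, DotCan k C P ρ ψ hent, lTensor_tmul, mulRight_apply,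
      one_mul]
  rw [h2, lemmaMinv k C P ρ ψ hent hsurj]

lemma lam_coinv (hent : ∀ q p : P, ρ (q * p) = Dotp k C P ψ p (ρ q))
    (hsurj : Function.Surjective (canMap k C P ρ)) (h1 : ρ 1 = 1 ⊗ₜ[k] e)
    {b : P} (hb : b ∈ coinv k C P ρ) (p : P) :
    ψ.symm ((p * b) ⊗ₜ[k] e)
      = LinearMap.lTensor C (LinearMap.mulRight k b) (ψ.symm (p ⊗ₜ[k] e)) := by
  have h2 : (p * b) ⊗ₜ[k] e = Dotp k C P ψ b (p ⊗ₜ[k] e) := by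
    rw [Dotp_tmul, psi_e k C P ρ ψ e hent h1, rho_coinv k C P ρ e h1 hb, rTensor_tmul,
      mulLeft_apply]
  rw [h2, lemmaMinv k C P ρ ψ hent hsurj]


section helpers2

variable {k : Type} [Field k]
variable {M M' N N' Q T R' : Type} [AddCommGroup M] [Module k M] [AddCommGroup M'] [Module k M']
  [AddCommGroup N] [Module k N] [AddCommGroup N'] [Module k N']
  [AddCommGroup Q] [Module k Q] [AddCommGroup T] [Module k T] [AddCommGroup R'] [Module k R']

lemma lTensor_sub' (f g : M →ₗ[k] N) :
    LinearMap.lTensor Q (f - g) = LinearMap.lTensor Q f - LinearMap.lTensor Q g := by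
  rw [eq_sub_iff_add_eq, ← LinearMap.lTensor_add, sub_add_cancel]

lemma rTensor_sub' (f g : M →ₗ[k] N) :
    LinearMap.rTensor Q (f - g) = LinearMap.rTensor Q f - LinearMap.rTensor Q g := by
  rw [eq_sub_iff_add_eq, ← LinearMap.rTensor_add, sub_add_cancel]

/-- commuting `lTensor` and `rTensor`. -/
lemma Hcomm (f : M →ₗ[k] M') (g : N →ₗ[k] N') (x : M ⊗[k] N) :
    LinearMap.lTensor M' g (LinearMap.rTensor N f x)
      = LinearMap.rTensor N' f (LinearMap.lTensor M g x) := by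
  rw [← LinearMap.comp_apply, LinearMap.lTensor_comp_rTensor, ← LinearMap.rTensor_comp_lTensor,
    LinearMap.comp_apply]

/-- naturality of the associator in the last slot. -/
lemma HN1 (h : Q →ₗ[k] T) (w : (M ⊗[k] N) ⊗[k] Q) :
    LinearMap.lTensor M (LinearMap.lTensor N h) (TensorProduct.assoc k M N Q w)
      = TensorProduct.assoc k M N T (LinearMap.lTensor (M ⊗[k] N) h w) := by
  induction w using TensorProduct.induction_on with
  | zero => simp
  | tmul y q =>
      induction y using TensorProduct.induction_on with
      | zero => simp
      | tmul m n => simp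
      | add a b ha hb => rw [add_tmul, map_add, map_add, ha, hb, map_add, map_add]
  | add a b ha hb => rw [map_add, map_add, ha, hb, map_add, map_add]

lemma HN2 (h : Q →ₗ[k] T) (v : M ⊗[k] (N ⊗[k] Q)) :
    (TensorProduct.assoc k M N T).symm (LinearMap.lTensor M (LinearMap.lTensor N h) v)
      = LinearMap.lTensor (M ⊗[k] N) h ((TensorProduct.assoc k M N Q).symm v) := by
  apply (TensorProduct.assoc k M N T).injective
  rw [LinearEquiv.apply_symm_apply, ← HN1, LinearEquiv.apply_symm_apply]

/-- naturality of the associator in the first slot. -/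
lemma HN5 (g : M →ₗ[k] M') (v : M ⊗[k] (N ⊗[k] Q)) :
    LinearMap.rTensor Q (LinearMap.rTensor N g) ((TensorProduct.assoc k M N Q).symm v)
      = (TensorProduct.assoc k M' N Q).symm (LinearMap.rTensor (N ⊗[k] Q) g v) := by
  induction v using TensorProduct.induction_on with
  | zero => simp
  | tmul m y =>
      induction y using TensorProduct.induction_on with
      | zero => simp
      | tmul n q => simp
      | add a b ha hb => rw [tmul_add, map_add, map_add, ha, hb, map_add, map_add]
  | add a b ha hb => rw [map_add, map_add, ha, hb, map_add, map_add]

lemma HN6 (g : M →ₗ[k] M') (w : (M ⊗[k] N) ⊗[k] Q) :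
    LinearMap.rTensor (N ⊗[k] Q) g (TensorProduct.assoc k M N Q w)
      = TensorProduct.assoc k M' N Q (LinearMap.rTensor Q (LinearMap.rTensor N g) w) := by
  have h := HN5 (k := k) g ((TensorProduct.assoc k M N Q) w)
  rw [LinearEquiv.symm_apply_apply] at h
  rw [h, LinearEquiv.apply_symm_apply]

lemma H7 (w : M ⊗[k] N) (t : T) :
    LinearMap.lTensor M ((TensorProduct.mk k N T).flip t) w
      = TensorProduct.assoc k M N T (w ⊗ₜ[k] t) := by
  induction w using TensorProduct.induction_on with
  | zero => simp
  | tmul m n => simp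
  | add a b ha hb => rw [map_add, add_tmul, map_add, ha, hb]

end helpers2

/-- the core coassociativity identity. -/
lemma core
    (hρcoassoc : ∀ p : P,
      TensorProduct.assoc k P C C (LinearMap.rTensor C ρ (ρ p)) =
        LinearMap.lTensor P (Coalgebra.comul (R := k) (A := C)) (ρ p)) (q : P) :
    LinearMap.lTensor P (gX k C D π e) (ρ q)
      = TensorProduct.assoc k P C D
          (LinearMap.rTensor D ρ (fA k C D P ρ π e q)) := by
  have part1 : LinearMap.lTensor P
        (LinearMap.lTensor C π ∘ₗ Coalgebra.comul (R := k) (A := C)) (ρ q)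
      = TensorProduct.assoc k P C D
          (LinearMap.rTensor D ρ (LinearMap.lTensor P π (ρ q))) := by
    rw [lTensor_comp, LinearMap.comp_apply, ← hρcoassoc q, HN1, ← Hcomm]
  have part2 : LinearMap.lTensor P ((TensorProduct.mk k C D).flip (π e)) (ρ q)
      = TensorProduct.assoc k P C D
          (LinearMap.rTensor D ρ (((TensorProduct.mk k P D).flip (π e)) q)) := by
    rw [LinearMap.flip_apply, TensorProduct.mk_apply, rTensor_tmul, H7]
  simp only [gX, fA, lTensor_sub', LinearMap.sub_apply, map_sub, LinearMap.comp_apply]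
  rw [part1, part2]

/-- colinearity of `σ` pushed along `π`. -/
lemma star (σ : P →ₗ[k] P ⊗[k] P)
    (hproj4 : ∀ p : P,
      LinearMap.rTensor C σ (ρ p) =
        (TensorProduct.assoc k P P C).symm (LinearMap.lTensor P ρ (σ p))) (q : P) :
    LinearMap.rTensor D σ (fA k C D P ρ π e q)
      = (TensorProduct.assoc k P P D).symm
          (LinearMap.lTensor P (fA k C D P ρ π e) (σ q)) := by
  have part1 : LinearMap.rTensor D σ (LinearMap.lTensor P π (ρ q))
      = (TensorProduct.assoc k P P D).symm
          (LinearMap.lTensor P (LinearMap.lTensor P π ∘ₗ ρ) (σ q)) := by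
    rw [← Hcomm, hproj4 q, ← HN2, ← LinearMap.lTensor_comp_apply]
  have part2 : LinearMap.rTensor D σ (((TensorProduct.mk k P D).flip (π e)) q)
      = (TensorProduct.assoc k P P D).symm
          (LinearMap.lTensor P ((TensorProduct.mk k P D).flip (π e)) (σ q)) := by
    rw [H7, LinearEquiv.symm_apply_apply, LinearMap.flip_apply, TensorProduct.mk_apply,
      rTensor_tmul]
  simp only [fA, lTensor_sub', LinearMap.sub_apply, map_sub, LinearMap.comp_apply]
  rw [part1, part2]

lemma Emap_mk (σ : P →ₗ[k] P ⊗[k] P) (p : P) :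
    Emap k P σ ∘ₗ TensorProduct.mk k P P p = LinearMap.rTensor P (LinearMap.mulLeft k p) ∘ₗ σ := by
  ext q
  simp only [LinearMap.coe_comp, Function.comp_apply, TensorProduct.mk_apply]
  rw [Emap_tmul]

lemma canMap_mk (p : P) :
    canMap k C P ρ ∘ₗ TensorProduct.mk k P P p
      = LinearMap.rTensor C (LinearMap.mulLeft k p) ∘ₗ ρ := by
  ext q
  simp only [LinearMap.coe_comp, Function.comp_apply, TensorProduct.mk_apply]
  rw [canMap_tmul]

/-- (†) : `F ∘ E = Ẽ ∘ F`. -/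
lemma dagger (σ : P →ₗ[k] P ⊗[k] P)
    (hproj4 : ∀ p : P,
      LinearMap.rTensor C σ (ρ p) =
        (TensorProduct.assoc k P P C).symm (LinearMap.lTensor P ρ (σ p)))
    (u : P ⊗[k] P) :
    LinearMap.lTensor P (fA k C D P ρ π e) (Emap k P σ u)
      = TensorProduct.assoc k P P D
          (LinearMap.rTensor D (Emap k P σ)
            ((TensorProduct.assoc k P P D).symm
              (LinearMap.lTensor P (fA k C D P ρ π e) u))) := by
  induction u using TensorProduct.induction_on with
  | zero => simp
  | tmul p q =>
      rw [Emap_tmul, lTensor_tmul, H1, Emap_mk, rTensor_comp, LinearMap.comp_apply,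
        star k C D P ρ π e σ hproj4, HN5, LinearEquiv.apply_symm_apply, Hcomm]
  | add a b ha hb => rw [map_add, map_add, ha, hb, map_add, map_add, map_add, map_add]

/-- (‡) : colinearity of `can` pushed along `π`. -/
lemma ddagger
    (hρcoassoc : ∀ p : P,
      TensorProduct.assoc k P C C (LinearMap.rTensor C ρ (ρ p)) =
        LinearMap.lTensor P (Coalgebra.comul (R := k) (A := C)) (ρ p))
    (u : P ⊗[k] P) :
    LinearMap.lTensor P (gX k C D π e) (canMap k C P ρ u)
      = TensorProduct.assoc k P C D
          (LinearMap.rTensor D (canMap k C P ρ)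
            ((TensorProduct.assoc k P P D).symm
              (LinearMap.lTensor P (fA k C D P ρ π e) u))) := by
  induction u using TensorProduct.induction_on with
  | zero => simp
  | tmul p q =>
      rw [canMap_tmul, lTensor_tmul, H1, canMap_mk, rTensor_comp, LinearMap.comp_apply,
        Hcomm, core k C D P ρ π e hρcoassoc, HN6]
  | add a b ha hb => rw [map_add, map_add, ha, hb, map_add, map_add, map_add, map_add]

lemma actz_zero : actz k D P 0 = 0 := by
  rw [actz, map_zero, LinearMap.comp_zero]

lemma actz_add (x y : D ⊗[k] P) : actz k D P (x + y) = actz k D P x + actz k D P y := by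
  rw [actz, actz, actz, map_add, LinearMap.comp_add]

lemma h_comp (ψ : C ⊗[k] P ≃ₗ[k] P ⊗[k] C)
    (hent : ∀ q p : P, ρ (q * p) = Dotp k C P ψ p (ρ q))
    (hsurj : Function.Surjective (canMap k C P ρ)) (h1 : ρ 1 = 1 ⊗ₜ[k] e) (p : P) :
    ((LinearMap.rTensor P π ∘ₗ ψ.symm.toLinearMap) ∘ₗ
        LinearMap.rTensor C (LinearMap.mulLeft k p)) ∘ₗ ρ
      = actz k D P (lamPi k C D P ψ π e p) := by
  apply LinearMap.ext
  intro q'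
  simp only [LinearMap.coe_comp, Function.comp_apply, LinearEquiv.coe_coe]
  rw [← canMap_tmul, keyK k C P ρ ψ e hent hsurj h1, ← Hcomm, actz_apply, lamPi_apply]

lemma H21 (ν : D ⊗[k] P) (q : P) :
    TensorProduct.assoc k D P C (LinearMap.rTensor C (actz k D P ν) (ρ q))
      = Xi k C D P ρ (ν ⊗ₜ[k] q) := by
  induction ν using TensorProduct.induction_on with
  | zero => rw [actz_zero, rTensor_zero, LinearMap.zero_apply, map_zero, zero_tmul, map_zero]
  | tmul d r =>
      have inner : ∀ W : P ⊗[k] C,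
          TensorProduct.assoc k D P C (LinearMap.rTensor C (actz k D P (d ⊗ₜ[k] r)) W)
            = d ⊗ₜ[k] LinearMap.rTensor C (LinearMap.mulLeft k r) W := by
        intro W
        induction W using TensorProduct.induction_on with
        | zero => simp
        | tmul x c =>
            rw [rTensor_tmul, actz_apply, lTensor_tmul, mulRight_apply, rTensor_tmul,
              mulLeft_apply]
            simp
        | add a b ha hb => rw [map_add, map_add, ha, hb, map_add, tmul_add]
      rw [inner (ρ q)]
      simp only [Xi, LinearMap.coe_comp, Function.comp_apply, LinearEquiv.coe_coe,
        assoc_tmul, lTensor_tmul]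
      rw [canMap_tmul]
  | add x y hx hy =>
      rw [actz_add, rTensor_add, LinearMap.add_apply, map_add, hx, hy, add_tmul, map_add]

lemma Lprime (ψ : C ⊗[k] P ≃ₗ[k] P ⊗[k] C)
    (hρcoassoc : ∀ p : P,
      TensorProduct.assoc k P C C (LinearMap.rTensor C ρ (ρ p)) =
        LinearMap.lTensor P (Coalgebra.comul (R := k) (A := C)) (ρ p))
    (hent : ∀ q p : P, ρ (q * p) = Dotp k C P ψ p (ρ q))
    (hsurj : Function.Surjective (canMap k C P ρ)) (h1 : ρ 1 = 1 ⊗ₜ[k] e)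
    (u : P ⊗[k] P) :
    ΛMap k C D P ψ π (canMap k C P ρ u) - (π e) ⊗ₜ[k] (canMap k C P ρ u)
      = Xi k C D P ρ (LinearMap.rTensor P (muM k C D P ψ π e) u) := by
  induction u using TensorProduct.induction_on with
  | zero => simp
  | tmul p q =>
      have stepA : ΛMap k C D P ψ π (canMap k C P ρ (p ⊗ₜ[k] q))
          = Xi k C D P ρ ((lamPi k C D P ψ π e p) ⊗ₜ[k] q) := by
        simp only [ΛMap, LinearMap.coe_comp, Function.comp_apply, LinearEquiv.coe_coe]
        rw [canMap_tmul, Hcomm, ← hρcoassoc q, HN6, LinearEquiv.symm_apply_apply,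
          ← rTensor_comp_apply, ← rTensor_comp_apply, ← rTensor_comp_apply,
          h_comp k C D P ρ π e ψ hent hsurj h1, H21]
      have stepB : (π e) ⊗ₜ[k] (canMap k C P ρ (p ⊗ₜ[k] q))
          = Xi k C D P ρ (((π e) ⊗ₜ[k] p) ⊗ₜ[k] q) := by
        simp only [Xi, LinearMap.coe_comp, Function.comp_apply, LinearEquiv.coe_coe,
          assoc_tmul, lTensor_tmul]
      rw [stepA, stepB, rTensor_tmul, ← map_sub, ← sub_tmul, muM_apply, lamPi_apply]
  | add x y hx hy =>
      simp only [map_add, tmul_add]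
      rw [← hx, ← hy]
      abel

/-- generic: image of `U ⊗ V` lands in the span of pure tensors. -/
lemma map_subtype_mem_span {V₁ : Type} [AddCommGroup V₁] [Module k V₁]
    (U V : Submodule k V₁) (S : Set (V₁ ⊗[k] V₁))
    (hS : ∀ u ∈ U, ∀ v ∈ V, u ⊗ₜ[k] v ∈ S) (z : U ⊗[k] V) :
    TensorProduct.map U.subtype V.subtype z ∈ Submodule.span k S := by
  induction z using TensorProduct.induction_on with
  | zero => simp
  | tmul u v =>
      rw [TensorProduct.map_tmul]
      exact Submodule.subset_span (hS u u.2 v v.2)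
  | add a b ha hb => rw [map_add]; exact Submodule.add_mem _ ha hb

lemma sigma_range (σ : P →ₗ[k] P ⊗[k] P)
    (hproj2 : ∀ p : P, σ p ∈
      Submodule.span k {w : P ⊗[k] P | ∃ b ∈ coinv k C P ρ, ∃ q : P, w = b ⊗ₜ[k] q})
    (p : P) :
    σ p ∈ LinearMap.range (LinearMap.rTensor P (Bsub k C P ρ).subtype) := by
  refine Submodule.span_le.mpr ?_ (hproj2 p)
  rintro w ⟨b, hb, q, rfl⟩
  exact ⟨(⟨b, hb⟩ : Bsub k C P ρ) ⊗ₜ[k] q, rfl⟩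

lemma sigma_A (σ : P →ₗ[k] P ⊗[k] P)
    (hproj2 : ∀ p : P, σ p ∈
      Submodule.span k {w : P ⊗[k] P | ∃ b ∈ coinv k C P ρ, ∃ q : P, w = b ⊗ₜ[k] q})
    (hproj4 : ∀ p : P,
      LinearMap.rTensor C σ (ρ p) =
        (TensorProduct.assoc k P P C).symm (LinearMap.lTensor P ρ (σ p)))
    {a : P} (ha : a ∈ LinearMap.ker (fA k C D P ρ π e)) :
    σ a ∈ Submodule.span k {w : P ⊗[k] P | ∃ b ∈ coinv k C P ρ,
      ∃ a' ∈ LinearMap.ker (fA k C D P ρ π e), w = b ⊗ₜ[k] a'} := by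
  obtain ⟨y, hy⟩ := sigma_range k C P ρ σ hproj2 a
  have h0 : LinearMap.lTensor P (fA k C D P ρ π e) (σ a) = 0 := by
    have hs := star k C D P ρ π e σ hproj4 a
    rw [LinearMap.mem_ker.mp ha, map_zero] at hs
    exact ((LinearEquiv.map_eq_zero_iff _).mp hs.symm)
  rw [← hy, Hcomm] at h0
  have h1 : LinearMap.lTensor (Bsub k C P ρ) (fA k C D P ρ π e) y = 0 :=
    rTensor_inj (Bsub k C P ρ).subtype (Submodule.injective_subtype _) (by simpa using h0)
  have h2 : y ∈ LinearMap.range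
      (LinearMap.lTensor (Bsub k C P ρ) (LinearMap.ker (fA k C D P ρ π e)).subtype) := by
    rw [← ker_lTensor_eq]; exact h1
  obtain ⟨z, hz⟩ := h2
  have : σ a = TensorProduct.map (Bsub k C P ρ).subtype
      (LinearMap.ker (fA k C D P ρ π e)).subtype z := by
    rw [← LinearMap.rTensor_comp_lTensor, LinearMap.comp_apply, hz, hy]
  rw [this]
  refine map_subtype_mem_span k _ _ _ ?_ z
  rintro u hu v hv
  exact ⟨u, hu, v, hv, rfl⟩

/-- the defect operator. -/
noncomputable def Dp (p : P) : P ⊗[k] P →ₗ[k] P ⊗[k] P :=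
  LinearMap.rTensor P (LinearMap.mulLeft k p) -
    TensorProduct.mk k P P p ∘ₗ LinearMap.mul' k P

lemma Dp_tmul (p b r : P) :
    Dp k P p (b ⊗ₜ[k] r) = (p * b) ⊗ₜ[k] r - p ⊗ₜ[k] (b * r) := by
  simp [Dp]

lemma Dp_mem (p : P) (T : Submodule k (P ⊗[k] P)) (S₀ : Set (P ⊗[k] P))
    (hgen : ∀ w ∈ S₀, Dp k P p w ∈ T) {x : P ⊗[k] P} (hx : x ∈ Submodule.span k S₀) :
    Dp k P p x ∈ T := by
  refine Submodule.span_induction hgen ?_ ?_ ?_ hx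
  · simp
  · intro a b _ _ ha hb; rw [map_add]; exact T.add_mem ha hb
  · intro c a _ ha; rw [map_smul]; exact T.smul_mem c ha

lemma sub_E_eq (σ : P →ₗ[k] P ⊗[k] P) (p a : P) (hmul : LinearMap.mul' k P (σ a) = a) :
    p ⊗ₜ[k] a - Emap k P σ (p ⊗ₜ[k] a) = - Dp k P p (σ a) := by
  rw [Emap_tmul, Dp, LinearMap.sub_apply, LinearMap.comp_apply, TensorProduct.mk_apply,
    hmul, neg_sub]

lemma E_kills_galRel (σ : P →ₗ[k] P ⊗[k] P)
    (hproj3 : ∀ b ∈ coinv k C P ρ, ∀ p : P,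
      σ (b * p) = LinearMap.rTensor P (LinearMap.mulLeft k b) (σ p)) :
    galRel k C P ρ ≤ LinearMap.ker (Emap k P σ) := by
  rw [galRel, Submodule.span_le]
  rintro w ⟨p, q, b, hb, rfl⟩
  rw [SetLike.mem_coe, LinearMap.mem_ker, map_sub, Emap_tmul, Emap_tmul, hproj3 b hb q,
    LinearMap.mulLeft_mul, rTensor_comp, LinearMap.comp_apply, sub_self]

lemma sub_E_mem_galRel (σ : P →ₗ[k] P ⊗[k] P)
    (hproj1 : ∀ p : P, LinearMap.mul' k P (σ p) = p)
    (hproj2 : ∀ p : P, σ p ∈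
      Submodule.span k {w : P ⊗[k] P | ∃ b ∈ coinv k C P ρ, ∃ q : P, w = b ⊗ₜ[k] q})
    (u : P ⊗[k] P) : u - Emap k P σ u ∈ galRel k C P ρ := by
  induction u using TensorProduct.induction_on with
  | zero => simp
  | tmul p q =>
      rw [sub_E_eq k P σ p q (hproj1 q)]
      refine Submodule.neg_mem _ ?_
      refine Dp_mem k P p _ _ ?_ (hproj2 q)
      rintro w ⟨b, hb, r, rfl⟩
      rw [Dp_tmul]
      exact Submodule.subset_span ⟨p, r, b, hb, rfl⟩
  | add x y hx hy =>
      have : x + y - Emap k P σ (x + y) = (x - Emap k P σ x) + (y - Emap k P σ y) := by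
        rw [map_add]; abel
      rw [this]
      exact Submodule.add_mem _ hx hy

lemma mu_coinv (ψ : C ⊗[k] P ≃ₗ[k] P ⊗[k] C)
    (hent : ∀ q p : P, ρ (q * p) = Dotp k C P ψ p (ρ q))
    (hsurj : Function.Surjective (canMap k C P ρ)) (h1 : ρ 1 = 1 ⊗ₜ[k] e)
    {b : P} (hb : b ∈ coinv k C P ρ) (p : P) :
    muM k C D P ψ π e (p * b)
      = LinearMap.lTensor D (LinearMap.mulRight k b) (muM k C D P ψ π e p) := by
  rw [muM_apply, muM_apply, lam_coinv k C P ρ ψ e hent hsurj h1 hb p, map_sub, Hcomm,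
    lTensor_tmul, mulRight_apply]

lemma mu_nat (ψ : C ⊗[k] P ≃ₗ[k] P ⊗[k] C) (σ : P →ₗ[k] P ⊗[k] P)
    (hent : ∀ q p : P, ρ (q * p) = Dotp k C P ψ p (ρ q))
    (hsurj : Function.Surjective (canMap k C P ρ)) (h1 : ρ 1 = 1 ⊗ₜ[k] e)
    (hproj2 : ∀ p : P, σ p ∈
      Submodule.span k {w : P ⊗[k] P | ∃ b ∈ coinv k C P ρ, ∃ q : P, w = b ⊗ₜ[k] q})
    (u : P ⊗[k] P) :
    LinearMap.rTensor P (muM k C D P ψ π e) (Emap k P σ u)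
      = RDP k D P σ (LinearMap.rTensor P (muM k C D P ψ π e) u) := by
  induction u using TensorProduct.induction_on with
  | zero => simp
  | tmul p q =>
      rw [Emap_tmul, rTensor_tmul, RDP_tmul]
      obtain ⟨y, hy⟩ := sigma_range k C P ρ σ hproj2 q
      rw [← hy, ← rTensor_comp_apply, ← rTensor_comp_apply, ← rTensor_comp_apply]
      have hmap : (muM k C D P ψ π e ∘ₗ LinearMap.mulLeft k p) ∘ₗ (Bsub k C P ρ).subtype
          = actz k D P (muM k C D P ψ π e p) ∘ₗ (Bsub k C P ρ).subtype := by
        apply LinearMap.ext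
        rintro ⟨b, hb⟩
        simp only [LinearMap.coe_comp, Function.comp_apply, Submodule.coe_subtype,
          mulLeft_apply]
        rw [mu_coinv k C D P ρ π e ψ hent hsurj h1 hb p, actz_apply]
      rw [hmap]
  | add x y hx hy => rw [map_add, map_add, hx, hy, map_add, map_add]

lemma actz_coinv (d : D) (p b q' : P) :
    actz k D P (d ⊗ₜ[k] (p * b)) q' = actz k D P (d ⊗ₜ[k] p) (b * q') := by
  rw [actz_apply, actz_apply, lTensor_tmul, lTensor_tmul, mulRight_apply, mulRight_apply,
    mul_assoc]

lemma RDP_kills (σ : P →ₗ[k] P ⊗[k] P)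
    (hproj3 : ∀ b ∈ coinv k C P ρ, ∀ p : P,
      σ (b * p) = LinearMap.rTensor P (LinearMap.mulLeft k b) (σ p))
    (d : D) {v : P ⊗[k] P} (hv : v ∈ KA k C D P ρ π e) :
    RDP k D P σ ((TensorProduct.assoc k D P P).symm (d ⊗ₜ[k] v)) = 0 := by
  refine Submodule.span_induction ?_ ?_ ?_ ?_ hv
  · rintro w ⟨p, b, hb, a, ha, rfl⟩
    rw [tmul_sub, map_sub, map_sub, assoc_symm_tmul, assoc_symm_tmul, RDP_tmul, RDP_tmul,
      hproj3 b hb a, ← rTensor_comp_apply]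
    have : actz k D P (d ⊗ₜ[k] (p * b)) = actz k D P (d ⊗ₜ[k] p) ∘ₗ LinearMap.mulLeft k b := by
      apply LinearMap.ext
      intro q'
      rw [LinearMap.comp_apply, mulLeft_apply, actz_coinv]
    rw [this, sub_self]
  · simp
  · intro a b _ _ ha hb
    rw [tmul_add, map_add, map_add, ha, hb, add_zero]
  · intro c a _ ha
    rw [tmul_smul, map_smul, map_smul, ha, smul_zero]

lemma mem_Abar_iff (ψ : C ⊗[k] P ≃ₗ[k] P ⊗[k] C) (p : P) :
    p ∈ Abar k C D P ψ π e ↔ muM k C D P ψ π e p = 0 := by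
  rw [muM_apply, sub_eq_zero]
  exact Iff.rfl

lemma sub_E_KA (σ : P →ₗ[k] P ⊗[k] P)
    (hproj1 : ∀ p : P, LinearMap.mul' k P (σ p) = p)
    (hproj2 : ∀ p : P, σ p ∈
      Submodule.span k {w : P ⊗[k] P | ∃ b ∈ coinv k C P ρ, ∃ q : P, w = b ⊗ₜ[k] q})
    (hproj4 : ∀ p : P,
      LinearMap.rTensor C σ (ρ p) =
        (TensorProduct.assoc k P P C).symm (LinearMap.lTensor P ρ (σ p)))
    (v : P ⊗[k] (LinearMap.ker (fA k C D P ρ π e))) :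
    LinearMap.lTensor P (LinearMap.ker (fA k C D P ρ π e)).subtype v
      - Emap k P σ (LinearMap.lTensor P (LinearMap.ker (fA k C D P ρ π e)).subtype v)
      ∈ KA k C D P ρ π e := by
  induction v using TensorProduct.induction_on with
  | zero => simp
  | tmul p a =>
      rw [lTensor_tmul, Submodule.coe_subtype, sub_E_eq k P σ p a.1 (hproj1 a.1)]
      refine Submodule.neg_mem _ ?_
      refine Dp_mem k P p _ _ ?_ (sigma_A k C D P ρ π e σ hproj2 hproj4 a.2)
      rintro w ⟨b, hb, a', ha', rfl⟩
      rw [Dp_tmul]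
      exact Submodule.subset_span ⟨p, b, hb, a', ha', rfl⟩
  | add x y hx hy =>
      have hxy : LinearMap.lTensor P (LinearMap.ker (fA k C D P ρ π e)).subtype (x + y)
            - Emap k P σ (LinearMap.lTensor P (LinearMap.ker (fA k C D P ρ π e)).subtype (x + y))
          = (LinearMap.lTensor P (LinearMap.ker (fA k C D P ρ π e)).subtype x
              - Emap k P σ (LinearMap.lTensor P (LinearMap.ker (fA k C D P ρ π e)).subtype x))
            + (LinearMap.lTensor P (LinearMap.ker (fA k C D P ρ π e)).subtype y
              - Emap k P σ (LinearMap.lTensor P (LinearMap.ker (fA k C D P ρ π e)).subtype y)) := by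
        rw [map_add, map_add]
        abel
      rw [hxy]
      exact Submodule.add_mem _ hx hy

-- MORE

end St10

/-- the canonical Galois map restricts to an isomorphism
`Ā ⊗_B A ≅ {w ∈ P ⊗ X | Λ(w) = ē ⊗ w}`. -/
theorem stmt10
    (ρ : P →ₗ[k] P ⊗[k] C)
    (hρcounit : ∀ p : P,
      TensorProduct.rid k P
        (LinearMap.lTensor P (Coalgebra.counit (R := k) (A := C)) (ρ p)) = p)
    (hρcoassoc : ∀ p : P,
      TensorProduct.assoc k P C C (LinearMap.rTensor C ρ (ρ p)) =
        LinearMap.lTensor P (Coalgebra.comul (R := k) (A := C)) (ρ p))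
    (e : C) (he_counit : Coalgebra.counit (R := k) e = 1)
    (he_comul : Coalgebra.comul (R := k) e = e ⊗ₜ[k] e)
    (h1 : ρ 1 = 1 ⊗ₜ[k] e)
    (hsurj : Function.Surjective (canMap k C P ρ))
    (hker : LinearMap.ker (canMap k C P ρ) = galRel k C P ρ)
    (ψ : C ⊗[k] P ≃ₗ[k] P ⊗[k] C)
    (hent : ∀ q p : P,
      ρ (q * p) =
        LinearMap.rTensor C (LinearMap.mul' k P)
          ((TensorProduct.assoc k P P C).symm
            (LinearMap.lTensor P ψ.toLinearMap
              (TensorProduct.assoc k P C P ((ρ q) ⊗ₜ[k] p)))))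
    (hproj : ∃ σ : P →ₗ[k] P ⊗[k] P,
      (∀ p : P, LinearMap.mul' k P (σ p) = p) ∧
      (∀ p : P, σ p ∈
        Submodule.span k {w : P ⊗[k] P | ∃ b ∈ coinv k C P ρ, ∃ q : P, w = b ⊗ₜ[k] q}) ∧
      (∀ b ∈ coinv k C P ρ, ∀ p : P,
        σ (b * p) = LinearMap.rTensor P (LinearMap.mulLeft k b) (σ p)) ∧
      (∀ p : P,
        LinearMap.rTensor C σ (ρ p) =
          (TensorProduct.assoc k P P C).symm (LinearMap.lTensor P ρ (σ p))))
    (π : C →ₗ[k] D)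
    (hπΔ : ∀ c : C,
      Coalgebra.comul (R := k) (π c) = TensorProduct.map π π (Coalgebra.comul c))
    (hπε : ∀ c : C,
      Coalgebra.counit (R := k) (π c) = Coalgebra.counit (R := k) c) :
    Submodule.map (canMap k C P ρ)
        (Submodule.span k {w : P ⊗[k] P | ∃ p ∈ Abar k C D P ψ π e,
          ∃ a ∈ Asub k C D P ρ π (π e), w = p ⊗ₜ[k] a}) =
      LinearMap.range (LinearMap.lTensor P (Xsub k C D π (π e)).subtype) ⊓
        LinearMap.ker (ΛMap k C D P ψ π - TensorProduct.mk k D (P ⊗[k] C) (π e)) ∧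
    (∀ w ∈ Submodule.span k {w : P ⊗[k] P | ∃ p ∈ Abar k C D P ψ π e,
          ∃ a ∈ Asub k C D P ρ π (π e), w = p ⊗ₜ[k] a},
      (canMap k C P ρ w = 0 ↔ w ∈ galRelAbarA k C D P ρ ψ π e)) := by
  classical
  obtain ⟨σ, hproj1, hproj2, hproj3, hproj4⟩ := hproj
  have hentD : ∀ q p : P, ρ (q * p) = St10.Dotp k C P ψ p (ρ q) :=
    St10.hent' k C P ρ ψ hent
  -- notation
  set G := galRelAbarA k C D P ρ ψ π e with hG
  set Sspan := Submodule.span k {w : P ⊗[k] P | ∃ p ∈ Abar k C D P ψ π e,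
      ∃ a ∈ Asub k C D P ρ π (π e), w = p ⊗ₜ[k] a} with hSspan
  have hcanE : ∀ u : P ⊗[k] P, canMap k C P ρ (St10.Emap k P σ u) = canMap k C P ρ u := by
    intro u
    have hs : u - St10.Emap k P σ u ∈ LinearMap.ker (canMap k C P ρ) := by
      rw [hker]
      exact St10.sub_E_mem_galRel k C P ρ σ hproj1 hproj2 u
    have h0 := LinearMap.mem_ker.mp hs
    rw [map_sub] at h0
    exact (sub_eq_zero.mp h0).symm
  have hEkill : ∀ x ∈ LinearMap.ker (canMap k C P ρ), St10.Emap k P σ x = 0 := by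
    intro x hx
    exact LinearMap.mem_ker.mp
      (St10.E_kills_galRel k C P ρ σ hproj3 (hker ▸ hx))
  constructor
  · -- part 1
    apply le_antisymm
    · -- ⊆
      rw [Submodule.map_span, Submodule.span_le]
      rintro y ⟨x, hx, rfl⟩
      obtain ⟨p, hp, a, ha, rfl⟩ := hx
      rw [SetLike.mem_coe, Submodule.mem_inf]
      constructor
      · -- range part
        have hgx : LinearMap.lTensor P (St10.gX k C D π e) (ρ a) = 0 := by
          rw [St10.core k C D P ρ π e hρcoassoc a]
          have hfa : St10.fA k C D P ρ π e a = 0 := LinearMap.mem_ker.mp ha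
          rw [hfa, map_zero, map_zero]
        have hrange : ρ a ∈ LinearMap.range
            (LinearMap.lTensor P (Xsub k C D π (π e)).subtype) := by
          rw [show Xsub k C D π (π e) = LinearMap.ker (St10.gX k C D π e) from rfl,
            ← St10.ker_lTensor_eq]
          exact hgx
        obtain ⟨y0, hy0⟩ := hrange
        exact ⟨LinearMap.rTensor _ (LinearMap.mulLeft k p) y0, by
          rw [St10.Hcomm, hy0, St10.canMap_tmul]⟩
      · -- ker part
        rw [LinearMap.mem_ker, LinearMap.sub_apply, TensorProduct.mk_apply,
          St10.Lprime k C D P ρ π e ψ hρcoassoc hentD hsurj h1 (p ⊗ₜ[k] a),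
          LinearMap.rTensor_tmul, (St10.mem_Abar_iff k C D P π e ψ p).mp hp,
          TensorProduct.zero_tmul, map_zero]
    · -- ⊇
      rintro w hw
      rw [Submodule.mem_inf] at hw
      obtain ⟨⟨wt, hwt⟩, hwker⟩ := hw
      obtain ⟨u₀, hu₀⟩ := hsurj w
      set u₁ := St10.Emap k P σ u₀ with hu₁def
      have hcan1 : canMap k C P ρ u₁ = w := by rw [hu₁def, hcanE, hu₀]
      -- step 1 : u₁ ∈ P ⊗ A
      have hgw : LinearMap.lTensor P (St10.gX k C D π e) w = 0 := by
        have hcomp : St10.gX k C D π e ∘ₗ (Xsub k C D π (π e)).subtype = 0 := by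
          apply LinearMap.ext
          rintro ⟨x, hx⟩
          simpa using (LinearMap.mem_ker.mp hx : St10.gX k C D π e x = 0)
        rw [← hwt, ← LinearMap.lTensor_comp_apply, hcomp, LinearMap.lTensor_zero,
          LinearMap.zero_apply]
      have hdd := St10.ddagger k C D P ρ π e hρcoassoc u₀
      rw [hu₀, hgw] at hdd
      have ht0 : LinearMap.rTensor D (canMap k C P ρ)
          ((TensorProduct.assoc k P P D).symm
            (LinearMap.lTensor P (St10.fA k C D P ρ π e) u₀)) = 0 :=
        (LinearEquiv.map_eq_zero_iff _).mp hdd.symm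
      have hrg : (TensorProduct.assoc k P P D).symm
            (LinearMap.lTensor P (St10.fA k C D P ρ π e) u₀)
          ∈ LinearMap.range (LinearMap.rTensor D
              (LinearMap.ker (canMap k C P ρ)).subtype) := by
        rw [← St10.ker_rTensor_eq]
        exact ht0
      obtain ⟨t', ht'⟩ := hrg
      have hEkerC : St10.Emap k P σ ∘ₗ (LinearMap.ker (canMap k C P ρ)).subtype = 0 := by
        apply LinearMap.ext
        rintro ⟨x, hx⟩
        simpa using hEkill x hx
      have hF1 : LinearMap.lTensor P (St10.fA k C D P ρ π e) u₁ = 0 := by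
        rw [hu₁def, St10.dagger k C D P ρ π e σ hproj4 u₀, ← ht',
          ← LinearMap.rTensor_comp_apply, hEkerC, LinearMap.rTensor_zero,
          LinearMap.zero_apply, map_zero]
      have hu₁A : u₁ ∈ LinearMap.range
          (LinearMap.lTensor P (LinearMap.ker (St10.fA k C D P ρ π e)).subtype) := by
        rw [← St10.ker_lTensor_eq]
        exact hF1
      obtain ⟨y₁, hy₁⟩ := hu₁A
      -- step 2 : E u₁ = u₁
      have hEE : St10.Emap k P σ u₁ = u₁ := by
        have h := hEkill (u₀ - St10.Emap k P σ u₀)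
          (by rw [hker]; exact St10.sub_E_mem_galRel k C P ρ σ hproj1 hproj2 u₀)
        rw [map_sub, sub_eq_zero] at h
        exact h.symm
      -- step 3 : rTensor muM u₁ = 0
      set t₁ := LinearMap.rTensor (LinearMap.ker (St10.fA k C D P ρ π e))
          (St10.muM k C D P ψ π e) y₁ with ht₁def
      have hcommu : LinearMap.rTensor P (St10.muM k C D P ψ π e) u₁
          = LinearMap.lTensor (D ⊗[k] P)
              (LinearMap.ker (St10.fA k C D P ρ π e)).subtype t₁ := by
        rw [← hy₁, ht₁def, St10.Hcomm]
      have hw0 : ΛMap k C D P ψ π w - (π e) ⊗ₜ[k] w = 0 := by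
        have h := LinearMap.mem_ker.mp hwker
        rw [LinearMap.sub_apply, TensorProduct.mk_apply] at h
        exact h
      have hLp := St10.Lprime k C D P ρ π e ψ hρcoassoc hentD hsurj h1 u₁
      rw [hcan1, hw0] at hLp
      set ctil := canMap k C P ρ ∘ₗ
          LinearMap.lTensor P (LinearMap.ker (St10.fA k C D P ρ π e)).subtype with hctil
      have hXi0 : LinearMap.lTensor D ctil
          (TensorProduct.assoc k D P (LinearMap.ker (St10.fA k C D P ρ π e)) t₁) = 0 := by
        have : St10.Xi k C D P ρ (LinearMap.rTensor P (St10.muM k C D P ψ π e) u₁)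
            = LinearMap.lTensor D ctil
                (TensorProduct.assoc k D P (LinearMap.ker (St10.fA k C D P ρ π e)) t₁) := by
          rw [hcommu]
          simp only [St10.Xi, LinearMap.coe_comp, Function.comp_apply, LinearEquiv.coe_coe]
          rw [← St10.HN1, ← LinearMap.lTensor_comp_apply, hctil]
        rw [← this, ← hLp]
      have hrg2 : TensorProduct.assoc k D P (LinearMap.ker (St10.fA k C D P ρ π e)) t₁
          ∈ LinearMap.range (LinearMap.lTensor D (LinearMap.ker ctil).subtype) := by
        rw [← St10.ker_lTensor_eq]
        exact hXi0
      obtain ⟨w₂, hw₂⟩ := hrg2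
      -- ker ctil lands in KA
      have hJ : ∀ v : LinearMap.ker ctil,
          LinearMap.lTensor P (LinearMap.ker (St10.fA k C D P ρ π e)).subtype v.1
            ∈ St10.KA k C D P ρ π e := by
        rintro ⟨v, hv⟩
        have hc0 : canMap k C P ρ
            (LinearMap.lTensor P (LinearMap.ker (St10.fA k C D P ρ π e)).subtype v) = 0 := by
          have := LinearMap.mem_ker.mp hv
          rw [hctil, LinearMap.comp_apply] at this
          exact this
        have hKA := St10.sub_E_KA k C D P ρ π e σ hproj1 hproj2 hproj4 v
        have hE0 : St10.Emap k P σ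
            (LinearMap.lTensor P (LinearMap.ker (St10.fA k C D P ρ π e)).subtype v) = 0 :=
          hEkill _ (LinearMap.mem_ker.mpr hc0)
        rw [hE0, sub_zero] at hKA
        exact hKA
      have hRDP0 : ∀ w' : D ⊗[k] (LinearMap.ker ctil),
          St10.RDP k D P σ
            (LinearMap.lTensor (D ⊗[k] P) (LinearMap.ker (St10.fA k C D P ρ π e)).subtype
              ((TensorProduct.assoc k D P (LinearMap.ker (St10.fA k C D P ρ π e))).symm
                (LinearMap.lTensor D (LinearMap.ker ctil).subtype w'))) = 0 := by
        intro w'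
        induction w' using TensorProduct.induction_on with
        | zero => simp
        | tmul d v =>
            rw [LinearMap.lTensor_tmul]
            have hnat := St10.HN2 (k := k)
              (h := (LinearMap.ker (St10.fA k C D P ρ π e)).subtype)
              (v := d ⊗ₜ[k] ((LinearMap.ker ctil).subtype v))
            rw [LinearMap.lTensor_tmul] at hnat
            rw [← hnat]
            exact St10.RDP_kills k C D P ρ π e σ hproj3 d (hJ v)
        | add x y hx hy => rw [map_add, map_add, map_add, map_add, hx, hy, add_zero]
      have hmu0 : LinearMap.rTensor P (St10.muM k C D P ψ π e) u₁ = 0 := by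
        have hnatmu : LinearMap.rTensor P (St10.muM k C D P ψ π e) u₁
            = St10.RDP k D P σ (LinearMap.rTensor P (St10.muM k C D P ψ π e) u₁) := by
          conv_lhs => rw [← hEE]
          exact St10.mu_nat k C D P ρ π e ψ σ hentD hsurj h1 hproj2 u₁
        have ht₁eq : t₁ = (TensorProduct.assoc k D P
              (LinearMap.ker (St10.fA k C D P ρ π e))).symm
            (LinearMap.lTensor D (LinearMap.ker ctil).subtype w₂) := by
          rw [hw₂, LinearEquiv.symm_apply_apply]
        rw [hnatmu, hcommu, ht₁eq]
        exact hRDP0 w₂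
      -- step 4 : conclude
      have hy₁0 : t₁ = 0 := by
        apply St10.lTensor_inj (LinearMap.ker (St10.fA k C D P ρ π e)).subtype
          (Submodule.injective_subtype _)
        rw [← hcommu, hmu0, map_zero]
      have hy₁r : y₁ ∈ LinearMap.range
          (LinearMap.rTensor (LinearMap.ker (St10.fA k C D P ρ π e))
            (LinearMap.ker (St10.muM k C D P ψ π e)).subtype) := by
        rw [← St10.ker_rTensor_eq]
        exact hy₁0
      obtain ⟨z, hz⟩ := hy₁r
      have hu₁' : u₁ = TensorProduct.map (LinearMap.ker (St10.muM k C D P ψ π e)).subtype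
          (LinearMap.ker (St10.fA k C D P ρ π e)).subtype z := by
        rw [← LinearMap.lTensor_comp_rTensor, LinearMap.comp_apply, hz, hy₁]
      have hu₁S : u₁ ∈ Sspan := by
        rw [hu₁', hSspan]
        refine St10.map_subtype_mem_span k _ _ _ ?_ z
        rintro u hu v hv
        exact ⟨u, (St10.mem_Abar_iff k C D P π e ψ u).mpr (LinearMap.mem_ker.mp hu), v, hv, rfl⟩
      exact Submodule.mem_map.mpr ⟨u₁, hu₁S, hcan1⟩
  · -- part 2
    intro w hw
    constructor
    · intro h0
      have hsub : w - St10.Emap k P σ w ∈ G := by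
        refine Submodule.span_induction
          (p := fun x _ => x - St10.Emap k P σ x ∈ G) ?_ ?_ ?_ ?_ hw
        · rintro x ⟨p, hp, a, ha, rfl⟩
          rw [St10.sub_E_eq k P σ p a (hproj1 a)]
          refine Submodule.neg_mem _ ?_
          refine St10.Dp_mem k P p _ _ ?_
            (St10.sigma_A k C D P ρ π e σ hproj2 hproj4 ha)
          rintro v ⟨b, hb, a', ha', rfl⟩
          rw [St10.Dp_tmul]
          exact Submodule.subset_span ⟨p, hp, b, hb, a', ha', rfl⟩
        · simpa using Submodule.zero_mem G
        · intro x y _ _ hx hy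
          have hxy : x + y - St10.Emap k P σ (x + y)
              = (x - St10.Emap k P σ x) + (y - St10.Emap k P σ y) := by
            rw [map_add]; abel
          rw [hxy]
          exact Submodule.add_mem _ hx hy
        · intro c x _ hx
          have hcx : c • x - St10.Emap k P σ (c • x) = c • (x - St10.Emap k P σ x) := by
            rw [map_smul, smul_sub]
          rw [hcx]
          exact Submodule.smul_mem _ c hx
      have hE0 : St10.Emap k P σ w = 0 := hEkill w (LinearMap.mem_ker.mpr h0)
      rw [hE0, sub_zero] at hsub
      exact hsub
    · intro hG'
      have hle : G ≤ galRel k C P ρ := by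
        rw [hG, galRelAbarA, galRel, Submodule.span_le]
        rintro x ⟨p, _, b, hb, a, _, rfl⟩
        exact Submodule.subset_span ⟨p, a, b, hb, rfl⟩
      have : w ∈ LinearMap.ker (canMap k C P ρ) := by
        rw [hker]
        exact hle hG'
      exact LinearMap.mem_ker.mp this
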